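/- Let R be a commutative noetherian local ring with maximal ideal m and residue field k, and let M be a cohomologically bounded complex. Then depth of the derived m-completion of M equals depth of M; that is, RHom_R(k, M) ≃ RHom_R(k, LΛ_m(M)), so inf RHom_R(k, M) = inf RHom_R(k, LΛ_m(M)). -/

import Mathlib

/-!
Common infrastructure: we work with cochain complexes of `R`-modules and their
derived category. `inf`/`sup`/amplitude of a complex refer to the degrees of
nonvanishing cohomology; hyper-Ext groups are Hom-groups in the derived category;
depth is `inf RHom(R/I, -)`; derived completeness is the Stacks-project
characterization `RHom(R_f, M) = 0` for all `f ∈ I`; Koszul complexes are realized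
as iterated mapping cones `K(r; M) = cone(M --r--> M)`; derived torsion (local
cohomology) of complexes is computed by the extended Čech complex on a generating
set (valid in the noetherian setting of the statements), realized (up to a shift
by the number of generators, which we account for) as a tensor product of the
cones of `R → R_f`.
-/

open CategoryTheory Limits HomologicalComplex Opposite

universe u

noncomputable section

namespace Paper

variable (R : Type u) [CommRing R]

/-- Cochain complexes of `R`-modules (cohomological grading). -/
abbrev Cplx := CochainComplex (ModuleCat.{u} R) ℤ

instance : (MonoidalCategory.curriedTensor (ModuleCat.{u} R)).Additive where
  map_add := by intros; ext; simp [MonoidalCategory.curriedTensor]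

instance (X : ModuleCat.{u} R) :
    ((MonoidalCategory.curriedTensor (ModuleCat.{u} R)).obj X).Additive where
  map_add := by intros; simp [MonoidalCategory.curriedTensor]

instance : HasDerivedCategory (ModuleCat.{u} R) := HasDerivedCategory.standard _

variable {R}

/-- A module viewed as a complex concentrated in cohomological degree `0`. -/
def sgl (M : ModuleCat.{u} R) : Cplx R :=
  (HomologicalComplex.single (ModuleCat.{u} R) (ComplexShape.up ℤ) 0).obj M

/-- The set of cohomological degrees where a complex has nonvanishing cohomology. -/
def cohSupp {C : Type*} [Category C] [Abelian C] {ι : Type*} {c : ComplexShape ι}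
    (K : HomologicalComplex C c) : Set ι :=
  {i | ¬ IsZero (K.homology i)}

/-- `inf` of a complex: the smallest degree with nonvanishing cohomology. -/
def cInf {C : Type*} [Category C] [Abelian C]
    (K : HomologicalComplex C (ComplexShape.up ℤ)) : ℤ :=
  sInf (cohSupp K)

/-- `sup` of a complex: the largest degree with nonvanishing cohomology. -/
def cSup {C : Type*} [Category C] [Abelian C]
    (K : HomologicalComplex C (ComplexShape.up ℤ)) : ℤ :=
  sSup (cohSupp K)

/-- amplitude `sup - inf`. -/
def camp {C : Type*} [Category C] [Abelian C]
    (K : HomologicalComplex C (ComplexShape.up ℤ)) : ℤ :=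
  cSup K - cInf K

/-- cohomologically bounded -/
def CohBounded {C : Type*} [Category C] [Abelian C]
    (K : HomologicalComplex C (ComplexShape.up ℤ)) : Prop :=
  ∃ a b : ℤ, ∀ i ∈ cohSupp K, a ≤ i ∧ i ≤ b

/-- Nonvanishing of the hyper-Ext group `Ext^i(K, L) = Hom_{D(R)}(K, L[i])`. -/
def extNonzero (K L : Cplx R) (i : ℤ) : Prop :=
  ∃ φ : DerivedCategory.Q.obj K ⟶ (DerivedCategory.Q.obj L)⟦i⟧, φ ≠ 0

/-- The `I`-depth of a complex `M`, i.e. `inf RHom_R(R/I, M)`. -/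
def depth (I : Ideal R) (M : Cplx R) : ℤ :=
  sInf {i | extNonzero (sgl (ModuleCat.of R (R ⧸ I))) M i}

/-- A complex `M` is derived `I`-complete iff `RHom_R(R_f, M) = 0` for every `f ∈ I`
(the Stacks project characterization). -/
def DerivedComplete (I : Ideal R) (M : Cplx R) : Prop :=
  ∀ f ∈ I, ∀ i : ℤ,
    ∀ φ : DerivedCategory.Q.obj (sgl (ModuleCat.of R (Localization.Away f))) ⟶
      (DerivedCategory.Q.obj M)⟦i⟧, φ = 0

/-- A module is derived `I`-complete iff it is so as a complex in degree `0`. -/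
def ModuleDerivedComplete (I : Ideal R) (N : ModuleCat.{u} R) : Prop :=
  DerivedComplete I (sgl N)

/-- The Koszul complex `K(r_1,...,r_n; M)`, realized as an iterated mapping cone of
multiplication maps, so that `K(r; M) = cone(M --r--> M)`. -/
def koszul (rs : List R) (M : Cplx R) : Cplx R :=
  rs.foldr (fun r K => CochainComplex.mappingCone (r • 𝟙 K)) M

/-- acyclicity of a complex -/
def Acyclic (K : Cplx R) : Prop := ∀ i, IsZero (K.homology i)

/-- Two complexes are isomorphic in the derived category. -/
def derIso (K L : Cplx R) : Prop :=
  Nonempty (DerivedCategory.Q.obj K ≅ DerivedCategory.Q.obj L)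

/-- bounded complex of finitely generated free modules -/
def IsBddFree (F : Cplx R) : Prop :=
  (∃ a b : ℤ, ∀ i, (i < a ∨ b < i) → IsZero (F.X i)) ∧
    ∀ i, Module.Free R (F.X i) ∧ Module.Finite R (F.X i)

/-- the residue field of a local ring, as a module over it -/
def resk (R : Type u) [CommRing R] [IsLocalRing R] : ModuleCat.{u} R :=
  ModuleCat.of R (IsLocalRing.ResidueField R)

/-- depth with respect to the maximal ideal: `inf RHom(k, M)` -/
def Depth [IsLocalRing R] (M : Cplx R) : ℤ :=
  sInf {i | extNonzero (sgl (resk R)) M i}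

/-- projective dimension of a bounded complex of finite free modules:
`pd F = sup F - inf (k ⊗^L F)`. -/
def pdF [IsLocalRing R] (F : Cplx R) : ℤ :=
  cSup F - cInf (tensorObj (sgl (resk R)) F)

/-- the map `R → k` as a map of complexes concentrated in degree 0 -/
def unitToRes (R : Type u) [CommRing R] [IsLocalRing R] :
    sgl (ModuleCat.of R R) ⟶ sgl (resk R) :=
  (HomologicalComplex.single (ModuleCat.{u} R) (ComplexShape.up ℤ) 0).map
    (ModuleCat.ofHom (Algebra.linearMap R (IsLocalRing.ResidueField R)))

/-- `P` is a semiprojective (bounded above, degreewise projective) resolution of `M`;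
tensoring with `P` then computes derived tensor products against `M`. -/
structure IsSemiprojRes (M P : Cplx R) (π : P ⟶ M) : Prop where
  qis : QuasiIso π
  proj : ∀ i, Projective (P.X i)
  bddAbove : ∃ b : ℤ, ∀ i, b < i → IsZero (P.X i)

/-- The natural map `H^0(M) → H^0(k ⊗^L M)`, computed on a semiprojective resolution
`P ≃ M` as `H^0(R ⊗ P) → H^0(k ⊗ P)` (note `H^0(R ⊗ P) ≅ H^0(P)`), is nonzero. -/
def MaxDepthMapNonzero (R : Type u) [CommRing R] [IsLocalRing R] (P : Cplx R) : Prop :=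
  homologyMap (tensorHom (unitToRes R) (𝟙 P)) 0 ≠ 0

/-- the extended Čech ("stable Koszul") complex on a list of elements, realized (up to
the shift by the number of elements) as the tensor product of the cones of `R → R_f`;
for noetherian rings, tensoring with it computes derived torsion. -/
def cech (rs : List R) : Cplx R :=
  rs.foldr
    (fun r K => tensorObj
      (CochainComplex.mappingCone
        ((HomologicalComplex.single (ModuleCat.{u} R) (ComplexShape.up ℤ) 0).map
          (ModuleCat.ofHom (Algebra.linearMap R (Localization.Away r))))) K)
    (sgl (ModuleCat.of R R))

/-- `RΓ_I(M)` computed by the Čech complex on generators `rs` of `I`; because of the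
realization of the Čech complex by cones it is shifted: the local cohomology
`H^i_I(M)` is the homology of this complex in degree `i - rs.length`. -/
def derivedTorsion (rs : List R) (M : Cplx R) : Cplx R :=
  tensorObj (cech rs) M

/-- `i`-th local cohomology of a complex, via the Čech complex on generators `rs`. -/
def localCohomologyCx (rs : List R) (M : Cplx R) (i : ℤ) : ModuleCat.{u} R :=
  (derivedTorsion rs M).homology (i - rs.length)

/-- `D` is a dualizing complex: bounded finitely generated cohomology, finite injective
dimension, and the homothety map `R → RHom(D,D)` is an isomorphism (equivalently:
`Hom_{D(R)}(D, D[i])` vanishes for `i ≠ 0` and homothety is bijective onto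
`Hom_{D(R)}(D, D)`). -/
def IsDualizing (D : Cplx R) : Prop :=
  CohBounded D ∧
  (∀ i : ℤ, Module.Finite R (D.homology i)) ∧
  (∃ n : ℤ, ∀ (N : ModuleCat.{u} R) (i : ℤ), n < i →
     ∀ φ : DerivedCategory.Q.obj (sgl N) ⟶ (DerivedCategory.Q.obj D)⟦i⟧, φ = 0) ∧
  Function.Bijective (fun a : R => DerivedCategory.Q.map (a • 𝟙 D)) ∧
  (∀ i : ℤ, i ≠ 0 → ∀ φ : DerivedCategory.Q.obj D ⟶ (DerivedCategory.Q.obj D)⟦i⟧, φ = 0)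

/-- `D` is right-normalized: `inf D = 0`, attained. -/
def IsRightNormalized (D : Cplx R) : Prop :=
  0 ∈ cohSupp D ∧ ∀ i ∈ cohSupp D, 0 ≤ i

/-- `E` is an injective hull of the residue field: an injective module containing the
residue field as an essential submodule. -/
def IsInjectiveHullOfResidueField (R : Type u) [CommRing R] [IsLocalRing R]
    (E : ModuleCat.{u} R) : Prop :=
  Injective E ∧
  ∃ ι : IsLocalRing.ResidueField R →ₗ[R] E, Function.Injective ι ∧
    ∀ S : Submodule R E, S ≠ ⊥ → ∃ y ∈ S, y ≠ 0 ∧ y ∈ LinearMap.range ι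

instance (N : ModuleCat.{u} R) :
    ((linearCoyoneda R (ModuleCat.{u} R)).obj (op N)).Additive where
  map_add := by intros; rfl

/-- `RHom_R(N, K)` for a module `N` and a complex `K`, computed by applying `Hom_R(N,-)`
degreewise (this computes the derived Hom as soon as `K` is a complex of injectives). -/
def homFromModule (N : ModuleCat.{u} R) (K : Cplx R) : Cplx R :=
  ((((linearCoyoneda R (ModuleCat.{u} R)).obj (op N)).mapHomologicalComplex
    (ComplexShape.up ℤ))).obj K

/-- `E` is a semiinjective (bounded below, degreewise injective) resolution of `M`. -/
structure IsSemiinjRes (M E : Cplx R) (ε : M ⟶ E) : Prop where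
  qis : QuasiIso ε
  inj : ∀ i, Injective (E.X i)
  bddBelow : ∃ a : ℤ, ∀ i, i < a → IsZero (E.X i)

instance {R S : Type u} [CommRing R] [CommRing S] (f : R →+* S) :
    (ModuleCat.restrictScalars.{u} f).Additive where
  map_add := rfl

instance {R S : Type u} [CommRing R] [CommRing S] (f : R →+* S) :
    (ModuleCat.extendScalars.{u, u} f).Additive where
  map_add {X Y g h} := by
    letI : Algebra R S := ((algebraMap S S).comp f).toAlgebra
    dsimp only [ModuleCat.extendScalars, ModuleCat.ExtendScalars.map']
    ext1
    exact LinearMap.baseChange_add _ _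

/-- restriction of scalars, for complexes -/
def restrictionFunctor {R S : Type u} [CommRing R] [CommRing S] (f : R →+* S) :
    Cplx S ⥤ Cplx R :=
  (ModuleCat.restrictScalars.{u} f).mapHomologicalComplex (ComplexShape.up ℤ)

/-- base change (extension of scalars) for complexes; along a flat ring map this
computes the derived base change `- ⊗^L_R S`. -/
def baseChangeFunctor {R S : Type u} [CommRing R] [CommRing S] (f : R →+* S) :
    Cplx R ⥤ Cplx S :=
  (ModuleCat.extendScalars.{u, u} f).mapHomologicalComplex (ComplexShape.up ℤ)




section Statement5Aux

open Pretriangulated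

/-- multiplication by `r` as an endo-natural transformation of `Q`. -/
def mulQNat (r : R) : (DerivedCategory.Q : Cplx R ⥤ _) ⟶ DerivedCategory.Q where
  app X := DerivedCategory.Q.map (r • 𝟙 X)
  naturality X Y g := by
    rw [← Functor.map_comp, ← Functor.map_comp, Linear.comp_smul, Linear.smul_comp,
      Category.comp_id, Category.id_comp]

/-- multiplication by `r` as an endo-natural transformation of the identity of `D(R)`. -/
def mulD (r : R) : 𝟭 (DerivedCategory (ModuleCat.{u} R)) ⟶ 𝟭 _ :=
  Localization.liftNatTrans DerivedCategory.Q
    (HomologicalComplex.quasiIso _ _) _ _ _ _ (mulQNat r)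

@[simp]
lemma mulD_app (r : R) (X : Cplx R) :
    (mulD r).app (DerivedCategory.Q.obj X) = DerivedCategory.Q.map (r • 𝟙 X) := by
  simp [mulD, mulQNat]

lemma shift_smul_one (r : R) (L : Cplx R) (i : ℤ) :
    (r • 𝟙 L)⟦i⟧' = r • 𝟙 (L⟦i⟧) := by
  ext n
  simp

lemma comp_shift_smul_zero (r : R) {A : DerivedCategory (ModuleCat.{u} R)}
    (hA : (mulD r).app A = 0) (L : Cplx R) (i : ℤ)
    (φ : A ⟶ (DerivedCategory.Q.obj L)⟦i⟧) :
    φ ≫ (DerivedCategory.Q.map (r • 𝟙 L))⟦i⟧' = 0 := by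
  have nat := (DerivedCategory.Q.commShiftIso i
    (C := Cplx R) (D := DerivedCategory (ModuleCat.{u} R))).hom.naturality (r • 𝟙 L)
  dsimp at nat
  have h1 : (DerivedCategory.Q.map (r • 𝟙 L))⟦i⟧' =
      (DerivedCategory.Q.commShiftIso i).inv.app L ≫
        DerivedCategory.Q.map ((r • 𝟙 L)⟦i⟧') ≫
        (DerivedCategory.Q.commShiftIso i).hom.app L := by
    rw [nat, Iso.inv_hom_id_app_assoc]
  rw [h1, shift_smul_one, ← mulD_app]
  have nat2 := (mulD r).naturality (φ ≫ (DerivedCategory.Q.commShiftIso i).inv.app L)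
  dsimp at nat2
  simp only [← Category.assoc] at nat2 ⊢
  rw [nat2, hA, zero_comp, zero_comp, zero_comp]

lemma smul_one_sgl_res [IsLocalRing R] (r : R)
    (hr : r ∈ IsLocalRing.maximalIdeal R) :
    (r • 𝟙 (sgl (resk R)) : sgl (resk R) ⟶ sgl (resk R)) = 0 := by
  have hx : ∀ y : IsLocalRing.ResidueField R, r • y = 0 := fun y => by
    rw [Algebra.smul_def, IsLocalRing.ResidueField.algebraMap_eq,
      (IsLocalRing.residue_eq_zero_iff r).mpr hr, zero_mul]
  apply HomologicalComplex.hom_ext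
  intro n
  by_cases hn : n = 0
  · subst hn
    refine ModuleCat.hom_ext (LinearMap.ext (fun x => ?_))
    have h1 : ((r • 𝟙 (sgl (resk R))).f 0).hom x = r • x := rfl
    rw [h1]
    exact hx x
  · exact (HomologicalComplex.isZero_single_obj_X (ComplexShape.up ℤ) 0
      (resk R) n hn).eq_of_src _ _

lemma mulD_app_res [IsLocalRing R] (r : R) (hr : r ∈ IsLocalRing.maximalIdeal R) :
    (mulD r).app (DerivedCategory.Q.obj (sgl (resk R))) = 0 := by
  rw [mulD_app, smul_one_sgl_res r hr, Functor.map_zero]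

lemma isZero_Q_obj_of_acyclic {K : Cplx R} (h : Acyclic K) :
    IsZero (DerivedCategory.Q.obj K) := by
  obtain ⟨Z, hZ⟩ := HasZeroObject.zero (C := Cplx R)
  have hz : ∀ n : ℤ, IsZero (Z.homology n) := fun n =>
    (HomologicalComplex.homologyFunctor (ModuleCat.{u} R)
      (ComplexShape.up ℤ) n).map_isZero hZ
  have : QuasiIso (0 : K ⟶ Z) := by
    rw [quasiIso_iff]
    intro n
    rw [quasiIsoAt_iff_isIso_homologyMap]
    exact ⟨0, (h n).eq_of_src _ _, (hz n).eq_of_src _ _⟩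
  exact IsZero.of_iso (DerivedCategory.Q.map_isZero hZ)
    (asIso (DerivedCategory.Q.map (0 : K ⟶ Z)))

lemma hom_shift_zero_of_acyclic {K : Cplx R} (h : Acyclic K)
    {A : DerivedCategory (ModuleCat.{u} R)} (i : ℤ)
    (φ : A ⟶ (DerivedCategory.Q.obj K)⟦i⟧) : φ = 0 :=
  (((shiftFunctor (DerivedCategory (ModuleCat.{u} R)) i).map_isZero
    (isZero_Q_obj_of_acyclic h)).eq_of_tgt _ _)

/-- The `Q`-image of a mapping-cone triangle is distinguished. -/
lemma Q_mapTriangle_distinguished {X Y : Cplx R} (g : X ⟶ Y) :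
    DerivedCategory.Q.mapTriangle.obj (CochainComplex.mappingCone.triangle g) ∈
      distTriang (DerivedCategory (ModuleCat.{u} R)) :=
  (DerivedCategory.mem_distTriang_iff _).2 ⟨X, Y, g, ⟨Iso.refl _⟩⟩

lemma step_lemma (r : R) {A : DerivedCategory (ModuleCat.{u} R)}
    (hA : (mulD r).app A = 0) (L : Cplx R)
    (h : ∀ j : ℤ, ∀ ψ : A ⟶
      (DerivedCategory.Q.obj (CochainComplex.mappingCone (r • 𝟙 L)))⟦j⟧, ψ = 0)
    (i : ℤ) (φ : A ⟶ (DerivedCategory.Q.obj L)⟦i⟧) : φ = 0 := by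
  have hT := Q_mapTriangle_distinguished (r • 𝟙 L)
  have hST := Pretriangulated.Triangle.shift_distinguished _ hT i
  obtain ⟨a, ha⟩ := Pretriangulated.Triangle.coyoneda_exact₂ _ hST
    (X := A) φ (h i _)
  have hz : a ≫ (DerivedCategory.Q.map (r • 𝟙 L))⟦i⟧' = 0 :=
    comp_shift_smul_zero r hA L i a
  have hmor : ((CategoryTheory.shiftFunctor
      (Pretriangulated.Triangle (DerivedCategory (ModuleCat.{u} R))) i).obj
      (DerivedCategory.Q.mapTriangle.obj
        (CochainComplex.mappingCone.triangle (r • 𝟙 L)))).mor₁ =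
      (Int.negOnePow i) • (DerivedCategory.Q.map (r • 𝟙 L))⟦i⟧' := rfl
  rw [ha]
  erw [hmor, Linear.comp_units_smul, hz]
  exact smul_zero _

lemma kill_lemma {A : DerivedCategory (ModuleCat.{u} R)} (rs : List R)
    (hrs : ∀ r ∈ rs, (mulD r).app A = 0) (K : Cplx R)
    (h : ∀ j : ℤ, ∀ ψ : A ⟶ (DerivedCategory.Q.obj (koszul rs K))⟦j⟧, ψ = 0) :
    ∀ i : ℤ, ∀ φ : A ⟶ (DerivedCategory.Q.obj K)⟦i⟧, φ = 0 := by
  induction rs generalizing K with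
  | nil => exact h
  | cons r rs ih =>
    refine ih (fun s hs => hrs s (List.mem_cons_of_mem _ hs)) K (fun j ψ => ?_)
    exact step_lemma r (hrs r List.mem_cons_self) (koszul rs K)
      (fun j' ψ' => h j' ψ') j ψ

end Statement5Aux

/-- Over a noetherian local ring, if `N = LΛ_m(M)` is the derived
`m`-adic completion of a cohomologically bounded complex `M` (characterized by: `N`
is derived `m`-complete and the completion map `f : M → N` has cone annihilated by
the Koszul complex on generators of `m`), then `RHom(k, M) ≃ RHom(k, N)`; in
particular every group `Ext^i(k,M) ≅ Ext^i(k,N)` and `depth M = depth N`. -/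
theorem statement5 (R : Type u) [CommRing R] [IsNoetherianRing R] [IsLocalRing R]
    (M N : Cplx R) (hM : CohBounded M)
    (f : M ⟶ N) (rs : List R)
    (hspan : Ideal.span {r | r ∈ rs} = IsLocalRing.maximalIdeal R)
    (hN : DerivedComplete (IsLocalRing.maximalIdeal R) N)
    -- `f : M → N` is the derived `m`-adic completion map: `N` is derived complete
    -- and the cone of `f` is killed by the Koszul complex on generators of `m`
    (hcone : Acyclic (koszul rs (CochainComplex.mappingCone f))) :
    (∀ i : ℤ,
      Nonempty ((DerivedCategory.Q.obj (sgl (resk R)) ⟶ (DerivedCategory.Q.obj M)⟦i⟧) ≃+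
        (DerivedCategory.Q.obj (sgl (resk R)) ⟶ (DerivedCategory.Q.obj N)⟦i⟧))) ∧
    Depth M = Depth N := by
  classical
  -- every generator lies in the maximal ideal
  have hmem : ∀ r ∈ rs, r ∈ IsLocalRing.maximalIdeal R := fun r hr => by
    rw [← hspan]; exact Ideal.subset_span hr
  have hrs : ∀ r ∈ rs, (mulD r).app (DerivedCategory.Q.obj (sgl (resk R))) = 0 :=
    fun r hr => mulD_app_res r (hmem r hr)
  -- `RHom(k, cone f) = 0`
  have hP : ∀ j : ℤ, ∀ ψ : DerivedCategory.Q.obj (sgl (resk R)) ⟶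
      (DerivedCategory.Q.obj (CochainComplex.mappingCone f))⟦j⟧, ψ = 0 :=
    kill_lemma rs hrs _ (fun j ψ => hom_shift_zero_of_acyclic hcone j ψ)
  have hT := Q_mapTriangle_distinguished f
  -- the shifted triangles and the resulting equivalences
  have key : ∀ i : ℤ,
      (DerivedCategory.Q.obj (sgl (resk R)) ⟶ (DerivedCategory.Q.obj M)⟦i⟧) ≃+
        (DerivedCategory.Q.obj (sgl (resk R)) ⟶ (DerivedCategory.Q.obj N)⟦i⟧) := by
    intro i
    have hST := Pretriangulated.Triangle.shift_distinguished _ hT i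
    set ST := (CategoryTheory.shiftFunctor
      (Pretriangulated.Triangle (DerivedCategory (ModuleCat.{u} R))) i).obj
      (DerivedCategory.Q.mapTriangle.obj (CochainComplex.mappingCone.triangle f)) with hSTdef
    have hIR := Pretriangulated.inv_rot_of_distTriang _ hST
    refine AddEquiv.ofBijective
      (AddMonoidHom.mk' (fun φ => φ ≫ ST.mor₁)
        (fun φ ψ => Preadditive.add_comp _ _ _ _ _ _)) ⟨?_, ?_⟩
    · -- injectivity
      intro φ ψ hφψ
      have hsub : (φ - ψ) ≫ ST.mor₁ = 0 := by
        erw [Preadditive.sub_comp]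
        rw [sub_eq_zero]
        exact hφψ
      obtain ⟨a, ha⟩ := Pretriangulated.Triangle.coyoneda_exact₂ _ hIR (φ - ψ) hsub
      have haz : a = 0 := by
        have e := (shiftFunctorAdd' (DerivedCategory (ModuleCat.{u} R)) i (-1) (i - 1)
          (by omega)).app (DerivedCategory.Q.obj (CochainComplex.mappingCone f))
        have h0 : a ≫ e.inv = 0 := hP (i - 1) _
        have : a = (a ≫ e.inv) ≫ e.hom := by erw [Category.assoc, Iso.inv_hom_id, Category.comp_id]
        rw [this, h0, zero_comp]
        rfl
      rw [haz, zero_comp] at ha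
      exact sub_eq_zero.1 ha
    · -- surjectivity
      intro ψ
      obtain ⟨a, ha⟩ := Pretriangulated.Triangle.coyoneda_exact₂ _ hST
        (X := DerivedCategory.Q.obj (sgl (resk R))) ψ (hP i _)
      exact ⟨a, ha.symm⟩
  refine ⟨fun i => ⟨key i⟩, ?_⟩
  unfold Depth
  congr 1
  ext i
  simp only [Set.mem_setOf_eq, extNonzero]
  constructor
  · rintro ⟨φ, hφ⟩
    exact ⟨key i φ, fun h0 => hφ ((key i).injective (by rw [h0, map_zero]))⟩
  · rintro ⟨ψ, hψ⟩
    exact ⟨(key i).symm ψ, fun h0 => hψ (by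
      have := congrArg (key i) h0
      rw [AddEquiv.apply_symm_apply, map_zero] at this
      exact this)⟩

end Paper

end
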